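/- For every i ≥ 2, the left-center of stage h_i of the H fractal is separated from the rest of the fractal by the three left bottleneck points and the center point: if p is in the left-center of h_i, q ∈ 𝐇, q is not in the left-center of h_i, and p and q are grid-adjacent, then q is one of the three left bottleneck points of h_i or the center point of h_i. -/

import Mathlib

/-- A point of the integer lattice `ℤ²`. -/
abbrev Pt := ℤ × ℤ

/-- Two points are grid-adjacent when their `ℓ¹` distance is `1`. -/
def adjPt (p q : Pt) : Prop := |p.1 - q.1| + |p.2 - q.2| = 1

/-- The generator of the H fractal. -/
def GH : Set Pt := {(0,0),(0,1),(0,2),(1,1),(2,0),(2,1),(2,2)}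

/-- `scaleAdd k A B = A + k·B` (componentwise). -/
def scaleAdd (k : ℤ) (A B : Set Pt) : Set Pt :=
  {q | ∃ p ∈ A, ∃ g ∈ B, q = (p.1 + k * g.1, p.2 + k * g.2)}

/-- The stages of the H fractal: `hstage 1 = GH` and
`hstage (i+1) = hstage i + 3^i · GH` for `i ≥ 1`. -/
def hstage : ℕ → Set Pt
  | 0 => ∅
  | 1 => GH
  | n + 2 => scaleAdd (3 ^ (n + 1)) (hstage (n + 1)) GH

/-- The H fractal `𝐇 = ⋃_{i ≥ 1} h_i`. -/
def HFractal : Set Pt := {p | ∃ i : ℕ, 1 ≤ i ∧ p ∈ hstage i}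

/-- The three left bottleneck points of stage `h_i` of the H fractal (for `i ≥ 2`). -/
def leftBotH (i : ℕ) : Set Pt :=
  {q | ∃ b ∈ ({(0,0),(0,1),(0,2)} : Set Pt),
    q = (3 ^ (i - 1) + ((3 : ℤ) ^ (i - 2) - 1) / 2 + 3 ^ (i - 2) * b.1,
         3 ^ (i - 1) + ((3 : ℤ) ^ (i - 2) - 1) / 2 + 3 ^ (i - 2) * b.2)}

/-- The center point of stage `h_i`. -/
def centerH (i : ℕ) : Pt := (((3 : ℤ) ^ i - 1) / 2, ((3 : ℤ) ^ i - 1) / 2)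

/-- The left-center of stage `h_i`: the points of `h_i` strictly between the left
bottleneck column and the center column. -/
def leftCenterH (i : ℕ) : Set Pt :=
  {p ∈ hstage i |
    3 ^ (i - 1) + ((3 : ℤ) ^ (i - 2) - 1) / 2 < p.1 ∧ p.1 < ((3 : ℤ) ^ i - 1) / 2}

lemma pow3_odd (k : ℕ) : (3:ℤ)^k % 2 = 1 := by
  induction k with
  | zero => rfl
  | succ n ih => rw [pow_succ]; omega

lemma pow3_pos (k : ℕ) : (0:ℤ) < 3^k := by positivity

lemma hstage_succ (n : ℕ) : hstage (n+2) = scaleAdd (3 ^ (n + 1)) (hstage (n + 1)) GH := rfl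

lemma mem_GH {g : Pt} (hg : g ∈ GH) :
    g = (0,0) ∨ g = (0,1) ∨ g = (0,2) ∨ g = (1,1) ∨ g = (2,0) ∨ g = (2,1) ∨ g = (2,2) := by
  simpa [GH] using hg

lemma hstage_bounds : ∀ i, ∀ q ∈ hstage i,
    0 ≤ q.1 ∧ q.1 ≤ 3^i - 1 ∧ 0 ≤ q.2 ∧ q.2 ≤ 3^i - 1 := by
  intro i
  induction i with
  | zero => intro q hq; exact absurd hq (by simp [hstage])
  | succ n ih =>
    match n, ih with
    | 0, _ =>
      intro q hq
      rcases mem_GH hq with rfl|rfl|rfl|rfl|rfl|rfl|rfl <;> norm_num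
    | m+1, ih =>
      intro q hq
      obtain ⟨p, hp, g, hg, rfl⟩ := hq
      obtain ⟨h1, h2, h3, h4⟩ := ih p hp
      have e : (3:ℤ)^(m+2) = 3 * 3^(m+1) := by ring
      have hpos := pow3_pos (m+1)
      rcases mem_GH hg with rfl|rfl|rfl|rfl|rfl|rfl|rfl <;> simp only [Prod.fst, Prod.snd] <;>
        refine ⟨by omega, by omega, by omega, by omega⟩

lemma hstage_mono : ∀ i j, 1 ≤ i → i ≤ j → ∀ q ∈ hstage i, q ∈ hstage j := by
  intro i j hi hij
  induction j with
  | zero => omega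
  | succ n ih =>
    rcases Nat.eq_or_lt_of_le hij with rfl | hlt
    · exact fun q hq => hq
    · intro q hq
      have hn : 1 ≤ n := by omega
      have hq' : q ∈ hstage n := ih (by omega) q hq
      obtain ⟨m, rfl⟩ : ∃ m, n = m + 1 := ⟨n - 1, by omega⟩
      rw [hstage_succ]
      exact ⟨q, hq', (0,0), by simp [GH], by simp⟩

lemma hstage_restrict : ∀ j i, 1 ≤ i → i ≤ j → ∀ q ∈ hstage j,
    q.1 ≤ 3^i - 1 → q.2 ≤ 3^i - 1 → q ∈ hstage i := by
  intro j
  induction j with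
  | zero => intro i h1 h2; omega
  | succ n ih =>
    intro i h1 h2 q hq hb1 hb2
    rcases Nat.eq_or_lt_of_le h2 with rfl | hlt
    · exact hq
    · have hn : 1 ≤ n := by omega
      obtain ⟨m, rfl⟩ : ∃ m, n = m + 1 := ⟨n - 1, by omega⟩
      rw [hstage_succ] at hq
      obtain ⟨p, hp, g, hg, rfl⟩ := hq
      obtain ⟨c1, c2, c3, c4⟩ := hstage_bounds _ p hp
      have hpow : (3:ℤ)^i ≤ 3^(m+1) := pow_le_pow_right₀ (by norm_num) (by omega)
      have hpos := pow3_pos (m+1)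
      have hg0 : g = (0,0) := by
        rcases mem_GH hg with rfl|rfl|rfl|rfl|rfl|rfl|rfl <;>
          simp only [Prod.fst, Prod.snd] at hb1 hb2 ⊢ <;> first | rfl | omega
      subst hg0
      simp only [Prod.fst, Prod.snd, mul_zero, add_zero] at *
      exact ih i h1 (by omega) p hp hb1 hb2

lemma HFractal_restrict (i : ℕ) (hi : 1 ≤ i) {q : Pt} (hq : q ∈ HFractal)
    (h1 : q.1 ≤ 3^i - 1) (h2 : q.2 ≤ 3^i - 1) : q ∈ hstage i := by
  obtain ⟨j, hj, hqj⟩ := hq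
  rcases le_or_gt j i with h | h
  · exact hstage_mono j i hj h q hqj
  · exact hstage_restrict j i hi (by omega) q hqj h1 h2

lemma center_unique : ∀ i, 1 ≤ i → ∀ q ∈ hstage i, 2 * q.1 = 3^i - 1 → 2 * q.2 = 3^i - 1 := by
  intro i
  induction i with
  | zero => omega
  | succ n ih =>
    intro _ q hq hc
    match n, ih, hq, hc with
    | 0, _, hq, hc =>
      rcases mem_GH hq with rfl|rfl|rfl|rfl|rfl|rfl|rfl <;>
        simp only [Prod.fst, Prod.snd] at hc ⊢ <;> omega
    | m+1, ih, hq, hc =>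
      obtain ⟨p, hp, g, hg, rfl⟩ := hq
      obtain ⟨c1, c2, c3, c4⟩ := hstage_bounds _ p hp
      have e : (3:ℤ)^(m+2) = 3 * 3^(m+1) := by ring
      have hpos := pow3_pos (m+1)
      have hodd := pow3_odd (m+1)
      have hg0 : g = (1,1) := by
        rcases mem_GH hg with rfl|rfl|rfl|rfl|rfl|rfl|rfl <;>
          simp only [Prod.fst, Prod.snd] at hc ⊢ <;> first | rfl | omega
      subst hg0
      simp only [Prod.fst, Prod.snd, mul_one] at hc ⊢
      have := ih (by omega) p hp (by omega)
      omega

lemma leftbot_unique : ∀ n : ℕ, ∀ q ∈ hstage (n+2),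
    2 * q.1 = 2 * 3^(n+1) + 3^n - 1 → q ∈ leftBotH (n+2) := by
  intro n q hq hc
  obtain ⟨p, hp, g, hg, rfl⟩ := hq
  obtain ⟨c1, c2, c3, c4⟩ := hstage_bounds _ p hp
  have e : (3:ℤ)^(n+1) = 3 * 3^n := by ring
  have hpos := pow3_pos n
  have hodd := pow3_odd n
  have hg0 : g = (1,1) := by
    rcases mem_GH hg with rfl|rfl|rfl|rfl|rfl|rfl|rfl <;>
      simp only [Prod.fst, Prod.snd] at hc ⊢ <;> first | rfl | omega
  subst hg0
  simp only [Prod.fst, Prod.snd, mul_one] at hc ⊢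
  -- now 2 * p.1 = 3^n - 1, p ∈ hstage (n+1)
  have hp1 : 2 * p.1 = 3^n - 1 := by omega
  have key : p.1 = ((3:ℤ)^n - 1)/2 ∧ (p.2 = p.1 ∨ p.2 = p.1 + 3^n ∨ p.2 = p.1 + 2 * 3^n) := by
    match n, hp, hp1, hpos, hodd, e with
    | 0, hp, hp1, _, _, _ =>
      rcases mem_GH hp with rfl|rfl|rfl|rfl|rfl|rfl|rfl <;>
        revert hp1 <;> norm_num
    | m+1, hp, hp1, hpos, hodd, e =>
      obtain ⟨r, hr, g', hg', rfl⟩ := hp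
      obtain ⟨d1, d2, d3, d4⟩ := hstage_bounds _ r hr
      have e2 : (3:ℤ)^(m+1) = 3 * 3^m := by ring
      have hpos2 := pow3_pos m
      have hg0' : g' = (0,0) ∨ g' = (0,1) ∨ g' = (0,2) := by
        rcases mem_GH hg' with rfl|rfl|rfl|rfl|rfl|rfl|rfl <;>
          simp only [Prod.fst, Prod.snd] at hp1 ⊢ <;> first | tauto | omega
      have hcent := center_unique (m+1) (by omega) r
      rcases hg0' with rfl|rfl|rfl <;>
        simp only [Prod.fst, Prod.snd] at hp1 hcent ⊢ <;>
        · have := hcent hr (by omega)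
          omega
  obtain ⟨k1, k2⟩ := key
  simp only [leftBotH, Set.mem_setOf_eq, Set.mem_insert_iff, Set.mem_singleton_iff,
    Nat.add_sub_cancel]
  have hidx : n + 2 - 1 = n + 1 := by omega
  rw [hidx]
  rcases k2 with h|h|h
  · exact ⟨(0,0), by tauto, by simp only [Prod.fst, Prod.snd, Prod.mk.injEq]; constructor <;> omega⟩
  · exact ⟨(0,1), by tauto, by simp only [Prod.fst, Prod.snd, Prod.mk.injEq]; constructor <;> omega⟩
  · exact ⟨(0,2), by tauto, by simp only [Prod.fst, Prod.snd, Prod.mk.injEq]; constructor <;> omega⟩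

lemma middle_lemma : ∀ n : ℕ, ∀ p ∈ hstage (n+2),
    3^(n+1) ≤ p.1 → p.1 < 2 * 3^(n+1) → 3^(n+1) ≤ p.2 ∧ p.2 < 2 * 3^(n+1) := by
  intro n p hp h1 h2
  obtain ⟨r, hr, g, hg, rfl⟩ := hp
  obtain ⟨c1, c2, c3, c4⟩ := hstage_bounds _ r hr
  have hpos := pow3_pos (n+1)
  have hg0 : g = (1,1) := by
    rcases mem_GH hg with rfl|rfl|rfl|rfl|rfl|rfl|rfl <;>
      simp only [Prod.fst, Prod.snd] at h1 h2 ⊢ <;> first | rfl | omega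
  subst hg0
  simp only [Prod.fst, Prod.snd, mul_one] at *
  omega

/-- For `i ≥ 2`, the left-center of `h_i` is separated from the
rest of `𝐇` by the three left bottleneck points and the center point. -/
theorem leftCenterH_separated :
    ∀ i : ℕ, 2 ≤ i → ∀ p ∈ leftCenterH i, ∀ q ∈ HFractal, q ∉ leftCenterH i →
      adjPt p q → q ∈ leftBotH i ∨ q = centerH i := by

  intro i hi p hp q hq hqn hadj
  obtain ⟨n, rfl⟩ : ∃ n, i = n + 2 := ⟨i - 2, by omega⟩
  have hidx1 : n + 2 - 1 = n + 1 := by omega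
  have hidx2 : n + 2 - 2 = n := by omega
  simp only [leftCenterH, Set.mem_setOf_eq, hidx1, hidx2] at hp hqn
  obtain ⟨hpm, hpl, hpr⟩ := hp
  have hoddn := pow3_odd n
  have hposn := pow3_pos n
  have hodd2 := pow3_odd (n+2)
  have e1 : (3:ℤ)^(n+1) = 3 * 3^n := by ring
  have e2 : (3:ℤ)^(n+2) = 9 * 3^n := by ring
  obtain ⟨b1, b2, b3, b4⟩ := hstage_bounds _ p hpm
  -- bounds for q
  have hq0 : 0 ≤ q.1 ∧ 0 ≤ q.2 := by
    obtain ⟨j, _, hqj⟩ := hq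
    obtain ⟨d1, _, d3, _⟩ := hstage_bounds _ q hqj
    exact ⟨d1, d3⟩
  -- adjacency case analysis
  have hcase : (q.1 = p.1 ∧ (q.2 = p.2 + 1 ∨ q.2 = p.2 - 1)) ∨
      (q.1 = p.1 + 1 ∧ q.2 = p.2) ∨ (q.1 = p.1 - 1 ∧ q.2 = p.2) := by
    rw [adjPt] at hadj
    rcases abs_cases (p.1 - q.1) with ⟨e,_⟩|⟨e,_⟩ <;> rcases abs_cases (p.2 - q.2) with ⟨f,_⟩|⟨f,_⟩ <;>
      rw [e, f] at hadj <;> omega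
  rcases hcase with ⟨hx, hy⟩ | ⟨hx, hy⟩ | ⟨hx, hy⟩
  · -- vertical move: derive contradiction
    exfalso
    by_cases hb : q.2 ≤ 3^(n+2) - 1
    · have hqm : q ∈ hstage (n+2) := HFractal_restrict (n+2) (by omega) hq (by omega) hb
      exact hqn ⟨hqm, by omega, by omega⟩
    · -- q.2 = 3^(n+2), so p.2 = 3^(n+2) - 1, but p is in the middle copy
      have hm := middle_lemma n p hpm (by omega) (by omega)
      omega
  · -- move right
    by_cases hc : 2 * q.1 = 3^(n+2) - 1
    · have hqm : q ∈ hstage (n+2) := HFractal_restrict (n+2) (by omega) hq (by omega) (by omega)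
      have := center_unique (n+2) (by omega) q hqm hc
      right
      have : q = (((3:ℤ)^(n+2) - 1)/2, ((3:ℤ)^(n+2) - 1)/2) := by
        rw [Prod.ext_iff]; constructor <;> simp only [Prod.fst, Prod.snd] <;> omega
      rw [this]; rfl
    · exfalso
      have hqm : q ∈ hstage (n+2) := HFractal_restrict (n+2) (by omega) hq (by omega) (by omega)
      exact hqn ⟨hqm, by omega, by omega⟩
  · -- move left
    by_cases hc : 2 * q.1 = 2 * 3^(n+1) + 3^n - 1
    · have hqm : q ∈ hstage (n+2) := HFractal_restrict (n+2) (by omega) hq (by omega) (by omega)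
      exact Or.inl (leftbot_unique n q hqm hc)
    · exfalso
      have hqm : q ∈ hstage (n+2) := HFractal_restrict (n+2) (by omega) hq (by omega) (by omega)
      exact hqn ⟨hqm, by omega, by omega⟩
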